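/- Let V ≥ 1, let σ : ℝ^V → ℝ^V be the softmax map σ(z)_i = exp(z_i)/∑_j exp(z_j), and let L : ℝ^V → ℝ be differentiable. Then for every z ∈ ℝ^V and every index i ∈ {1,…,V}, |∂(L ∘ σ)/∂z_i (z)| ≤ 2·σ(z)_i·max_{j ∈ {1,…,V}} |(∇L(σ(z)))_j|. In particular, the magnitude of the gradient received by the i-th logit is bounded proportionally to its post-softmax probability σ(z)_i, so logits whose post-softmax probability is small cannot be updated effectively by gradient descent. -/

import Mathlib

noncomputable def softmax {V : ℕ} (z : EuclideanSpace ℝ (Fin V)) :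
    EuclideanSpace ℝ (Fin V) :=
  WithLp.toLp 2 (fun i => Real.exp (z i) / ∑ j, Real.exp (z j))

section aux

variable {V : ℕ}

lemma sum_exp_pos (hV : 0 < V) (w : Fin V → ℝ) : 0 < ∑ k, Real.exp (w k) :=
  Finset.sum_pos (fun j _ => Real.exp_pos _)
    (Finset.univ_nonempty_iff.mpr (Fin.pos_iff_nonempty.mp hV))

/-- softmax is differentiable. -/
lemma softmax_differentiable (hV : 0 < V) : Differentiable ℝ (softmax (V := V)) := by
  set E := PiLp.continuousLinearEquiv 2 ℝ (fun _ : Fin V => ℝ)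
  have hrep : softmax (V := V)
      = E.symm ∘ (fun w : Fin V → ℝ => fun j => Real.exp (w j) / ∑ k, Real.exp (w k)) ∘ E := by
    funext w; rfl
  rw [hrep]
  refine E.symm.differentiable.comp (Differentiable.comp ?_ E.differentiable)
  refine differentiable_pi.2 fun j => ?_
  have h1 : Differentiable ℝ (fun x : Fin V → ℝ => Real.exp (x j)) :=
    Real.differentiable_exp.comp (differentiable_apply j)
  have h2 : Differentiable ℝ (fun x : Fin V → ℝ => ∑ k, Real.exp (x k)) :=
    Differentiable.fun_sum fun k _ => Real.differentiable_exp.comp (differentiable_apply k)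
  have h3 : Differentiable ℝ (fun x : Fin V → ℝ => (∑ k, Real.exp (x k))⁻¹) :=
    h2.inv fun w => (sum_exp_pos hV w).ne'
  simp only [div_eq_mul_inv]
  exact h1.mul h3

end aux

/-- For a differentiable loss `L : ℝ^V → ℝ` composed with the softmax map `σ`, the
magnitude of the partial derivative of `L ∘ σ` with respect to the `i`-th logit is
bounded by `2 · σ(z)_i · max_j |(∇L(σ(z)))_j|`: logits with small post-softmax
probability cannot be updated effectively by gradient descent. -/
theorem grad_loss_softmax_bound (V : ℕ) (hV : 1 ≤ V)
    (L : EuclideanSpace ℝ (Fin V) → ℝ) (hL : Differentiable ℝ L) :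
    ∀ (z : EuclideanSpace ℝ (Fin V)) (i : Fin V),
      |fderiv ℝ (fun w => L (softmax w)) z (EuclideanSpace.single i 1)| ≤
        2 * softmax z i * ⨆ j, |gradient L (softmax z) j| := by
  intro z i
  have hV0 : 0 < V := hV
  haveI : Nonempty (Fin V) := Fin.pos_iff_nonempty.mp hV0
  set e : EuclideanSpace ℝ (Fin V) := EuclideanSpace.single i 1 with he
  set σ := softmax z with hσ
  set g := gradient L (softmax z) with hg
  set S := ∑ k, Real.exp (z k) with hS
  have hSpos : 0 < S := sum_exp_pos hV0 z
  -- the direction's coordinates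
  set c : Fin V → ℝ := fun j => if j = i then 1 else 0 with hc
  -- derivative of softmax along the line t ↦ z + t • e
  set u : EuclideanSpace ℝ (Fin V) := WithLp.toLp 2 (fun j => σ j * (c j - σ i)) with hu
  have hcoord : ∀ (t : ℝ) (j : Fin V), (z + t • e) j = z j + t * c j := by
    intro t j
    simp [he, hc, EuclideanSpace.single_apply]
  have hψ : HasDerivAt (fun t : ℝ => softmax (z + t • e)) u 0 := by
    set E := PiLp.continuousLinearEquiv 2 ℝ (fun _ : Fin V => ℝ)
    have h0 : HasDerivAt (fun t : ℝ => (fun j => softmax (z + t • e) j : Fin V → ℝ))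
        (fun j => σ j * (c j - σ i)) 0 := by
      refine hasDerivAt_pi.2 fun j => ?_
      have hnum : HasDerivAt (fun t : ℝ => Real.exp (z j + t * c j))
          (Real.exp (z j) * c j) 0 := by
        have h1 : HasDerivAt (fun t : ℝ => z j + t * c j) (c j) 0 :=
          (hasDerivAt_mul_const (c j)).const_add (z j)
        simpa using h1.exp
      have hden : HasDerivAt (fun t : ℝ => ∑ k, Real.exp (z k + t * c k))
          (∑ k, Real.exp (z k) * c k) 0 := by
        refine HasDerivAt.fun_sum fun k _ => ?_
        have h1 : HasDerivAt (fun t : ℝ => z k + t * c k) (c k) 0 :=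
          (hasDerivAt_mul_const (c k)).const_add (z k)
        simpa using h1.exp
      have hden0 : (∑ k, Real.exp (z k + 0 * c k)) ≠ 0 := by
        simpa using (sum_exp_pos hV0 z).ne'
      have hdiv := hnum.div hden (by simpa using hden0)
      have heq : ∀ t : ℝ, softmax (z + t • e) j
          = Real.exp (z j + t * c j) / ∑ k, Real.exp (z k + t * c k) := by
        intro t
        simp only [softmax, hcoord]
      have hsum : (∑ k, Real.exp (z k) * c k) = Real.exp (z i) := by
        simp [hc, Finset.sum_ite_eq', Finset.mem_univ]
      have hval : (Real.exp (z j) * c j * (∑ k, Real.exp (z k + 0 * c k))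
            - Real.exp (z j + 0 * c j) * ∑ k, Real.exp (z k) * c k)
            / (∑ k, Real.exp (z k + 0 * c k)) ^ 2
          = σ j * (c j - σ i) := by
        simp only [zero_mul, add_zero, hsum, hσ, softmax, ← hS]
        field_simp
      rw [show (fun t : ℝ => softmax (z + t • e) j)
          = fun t : ℝ => Real.exp (z j + t * c j) / ∑ k, Real.exp (z k + t * c k)
          from funext heq]
      exact hval ▸ hdiv
    have := (E.symm.toContinuousLinearMap.hasFDerivAt
        (x := (fun j => softmax (z + (0:ℝ) • e) j : Fin V → ℝ))).comp_hasDerivAt 0 h0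
    exact this
  have hψ0 : softmax (z + (0:ℝ) • e) = σ := by simp [hσ]
  -- derivative of L ∘ softmax along the line, two ways
  have hLd : HasDerivAt (fun t : ℝ => L (softmax (z + t • e)))
      (fderiv ℝ L σ u) 0 := by
    have := (hL (softmax (z + (0:ℝ) • e))).hasFDerivAt.comp_hasDerivAt 0 hψ
    rwa [hψ0] at this
  have hline : HasDerivAt (fun t : ℝ => z + t • e) e 0 := by
    simpa using ((hasDerivAt_id (0:ℝ)).smul_const e).const_add z
  have hcomp : HasDerivAt (fun t : ℝ => L (softmax (z + t • e)))
      (fderiv ℝ (fun w => L (softmax w)) z e) 0 := by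
    have hdiff : DifferentiableAt ℝ (fun w => L (softmax w)) z :=
      ((hL (softmax z)).comp z ((softmax_differentiable hV0) z))
    have hz : z + (0:ℝ) • e = z := by simp
    have hdiff' : DifferentiableAt ℝ (fun w => L (softmax w)) (z + (0:ℝ) • e) := by
      rw [hz]; exact hdiff
    have := hdiff'.hasFDerivAt.comp_hasDerivAt 0 hline
    rwa [hz] at this
  have hkey : fderiv ℝ (fun w => L (softmax w)) z e = fderiv ℝ L σ u :=
    hcomp.unique hLd
  -- express via the gradient
  have hgrad : fderiv ℝ L σ u = ∑ j, g j * u j := by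
    have h1 : fderiv ℝ L σ u = inner (𝕜 := ℝ) g u := by
      rw [((hL σ).hasGradientAt).hasFDerivAt.fderiv]
      simp [hg, hσ, InnerProductSpace.toDual_apply_apply]
    rw [h1]
    simp [PiLp.inner_apply, RCLike.inner_apply]
    exact Finset.sum_congr rfl fun j _ => mul_comm _ _
  -- the bound
  set M := ⨆ j, |g j| with hM
  have hbdd : BddAbove (Set.range fun j => |g j|) := Set.finite_range _ |>.bddAbove
  have hle : ∀ j, |g j| ≤ M := fun j => le_ciSup hbdd j
  have hM0 : 0 ≤ M := (abs_nonneg _).trans (hle (Classical.arbitrary _))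
  have hσnonneg : ∀ j, 0 ≤ σ j := fun j =>
    div_nonneg (Real.exp_pos _).le hSpos.le
  have hσsum : ∑ j, σ j = 1 := by
    simp only [hσ, softmax, ← hS]
    rw [← Finset.sum_div]
    exact div_self hSpos.ne'
  rw [hkey, hgrad]
  have hsplit : ∑ j, g j * u j = σ i * g i - σ i * ∑ j, g j * σ j := by
    simp only [hu]
    have h1 : ∑ j, g j * (σ j * (c j - σ i))
        = (∑ j, g j * σ j * c j) - σ i * ∑ j, g j * σ j := by
      rw [Finset.mul_sum, ← Finset.sum_sub_distrib]
      exact Finset.sum_congr rfl fun j _ => by ring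
    have h2 : ∑ j, g j * σ j * c j = g i * σ i := by
      simp [hc, mul_ite, Finset.sum_ite_eq', Finset.mem_univ]
    rw [h1, h2]
    ring
  rw [hsplit]
  have h1 : |σ i * g i - σ i * ∑ j, g j * σ j|
      ≤ σ i * M + σ i * M := by
    refine (abs_sub _ _).trans ?_
    gcongr
    · rw [abs_mul, abs_of_nonneg (hσnonneg i)]
      exact mul_le_mul_of_nonneg_left (hle i) (hσnonneg i)
    · rw [abs_mul, abs_of_nonneg (hσnonneg i)]
      refine mul_le_mul_of_nonneg_left ?_ (hσnonneg i)
      calc |∑ j, g j * σ j| ≤ ∑ j, |g j * σ j| := Finset.abs_sum_le_sum_abs _ _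
        _ ≤ ∑ j, M * σ j := by
            refine Finset.sum_le_sum fun j _ => ?_
            rw [abs_mul, abs_of_nonneg (hσnonneg j)]
            exact mul_le_mul_of_nonneg_right (hle j) (hσnonneg j)
        _ = M := by rw [← Finset.mul_sum, hσsum, mul_one]
  calc |σ i * g i - σ i * ∑ j, g j * σ j| ≤ σ i * M + σ i * M := h1
    _ = 2 * σ i * M := by ring
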